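/- arXiv:1512.04152 — 2 statements merged into one kernel-verified Lean document; each statement's English description precedes it below -/
import Mathlib

section
/- The hazard rate of the Frechet distribution with shape parameter α > 1, namely h(x) = α x^{-α-1} exp(-x^{-α}) / (1 - exp(-x^{-α})), satisfies h(x) ≤ 2α for all x > 0. -/
theorem frechet_hazard_bound (α : ℝ) (hα : 1 < α) (x : ℝ) (hx : 0 < x) :
    α * x ^ (-α - 1) * Real.exp (-x ^ (-α)) / (1 - Real.exp (-x ^ (-α))) ≤ 2 * α := by
  set t : ℝ := x ^ (-α) with ht
  have htpos : 0 < t := Real.rpow_pos_of_pos hx _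
  have hαpos : (0:ℝ) < α := by linarith
  have hexp : 1 < Real.exp t := by
    rw [← Real.exp_zero]; exact Real.exp_lt_exp.mpr htpos
  -- rewrite LHS
  have hx1 : x ^ (-α - 1) = t / x := by
    rw [ht, Real.rpow_sub hx, Real.rpow_one]
  have hne : 1 - Real.exp (-t) = (Real.exp t - 1) / Real.exp t := by
    rw [Real.exp_neg]; field_simp
  have hLHS : α * x ^ (-α - 1) * Real.exp (-t) / (1 - Real.exp (-t))
      = α * t / (x * (Real.exp t - 1)) := by
    rw [hx1, hne, Real.exp_neg]
    have h1 : Real.exp t ≠ 0 := (Real.exp_pos t).ne'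
    have h2 : Real.exp t - 1 ≠ 0 := by linarith
    field_simp
  rw [hLHS]
  have hden : 0 < x * (Real.exp t - 1) := mul_pos hx (by linarith)
  rw [div_le_iff₀ hden]
  -- suffices: t ≤ 2 * x * (exp t - 1)
  have key : t ≤ 2 * x * (Real.exp t - 1) := by
    rcases le_total 1 x with hx1' | hx1'
    · have := Real.add_one_le_exp t
      nlinarith
    · -- x ≤ 1 : use x * t = x^(1-α) ≥ 1 and exp t - 1 ≥ t^2/2
      have hxt : 1 ≤ x * t := by
        have : x * t = x ^ (1 - α) := by
          rw [ht]
          nth_rewrite 1 [← Real.rpow_one x]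
          rw [← Real.rpow_add hx]
          ring_nf
        rw [this]
        exact Real.one_le_rpow_of_pos_of_le_one_of_nonpos hx hx1' (by linarith)
      have hq := Real.quadratic_le_exp_of_nonneg htpos.le
      nlinarith
  nlinarith
end

section
/- Let X_1, ..., X_N be i.i.d. random variables with P(X_1 > x) = exp(-(x+1)^{1/m} + 1) for x ≥ 0, where m ≥ 1 is a positive integer. Then E[max_i X_i] ≤ 10 · m! · (log N)^m for N ≥ e. -/
open MeasureTheory ProbabilityTheory

open Real Set Finset Filter Topology in
private lemma weib_sum_deriv (m : ℕ) (hm : 1 ≤ m) (y : ℝ) :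
    HasDerivAt (fun y : ℝ => ∑ k ∈ range m, y ^ k / k.factorial)
      ((∑ k ∈ range m, y ^ k / k.factorial) - y ^ (m - 1) / (m - 1).factorial) y := by
  obtain ⟨n, rfl⟩ : ∃ n, m = n + 1 := ⟨m - 1, (Nat.succ_pred_eq_of_pos hm).symm⟩
  have h : HasDerivAt (fun y : ℝ => ∑ k ∈ range (n+1), y ^ k / k.factorial)
      (∑ k ∈ range (n+1), (k : ℝ) * y ^ (k-1) / k.factorial) y := by
    apply HasDerivAt.fun_sum
    intro k _
    simpa [div_eq_mul_inv, mul_comm, mul_assoc, mul_left_comm] using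
      (hasDerivAt_pow k y).div_const (k.factorial : ℝ)
  convert h using 1
  rw [Finset.sum_range_succ' (fun k => (k : ℝ) * y ^ (k-1) / k.factorial) n]
  have key : ∀ k : ℕ, ((k+1:ℕ) : ℝ) * y ^ (k + 1 - 1) / ((k+1).factorial : ℝ)
      = y ^ k / k.factorial := by
    intro k
    rw [Nat.factorial_succ]
    push_cast
    field_simp
  rw [Finset.sum_congr rfl (fun k _ => key k)]
  rw [Finset.sum_range_succ (fun k => y ^ k / (k.factorial : ℝ)) n]
  simp

open Real Set Finset Filter Topology in
private lemma weib_g_deriv (m : ℕ) (hm : 1 ≤ m) (y : ℝ) :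
    HasDerivAt (fun y : ℝ => -((m.factorial : ℝ) *
        (Real.exp (-y + 1) * ∑ k ∈ range m, y ^ k / k.factorial)))
      ((m : ℝ) * y ^ (m - 1) * Real.exp (-y + 1)) y := by
  have he : HasDerivAt (fun y : ℝ => Real.exp (-y + 1)) (-Real.exp (-y + 1)) y := by
    simpa using (((hasDerivAt_id y).neg.add_const 1).exp)
  have h := (he.mul (weib_sum_deriv m hm y)).const_mul (m.factorial : ℝ) |>.neg
  refine h.congr_deriv ?_
  have hfac : (m.factorial : ℝ) = m * (m-1).factorial := by
    exact_mod_cast (Nat.mul_factorial_pred (by omega)).symm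
  have hne : ((m-1).factorial : ℝ) ≠ 0 := Nat.cast_ne_zero.mpr (Nat.factorial_ne_zero _)
  rw [hfac]
  field_simp
  ring

open Real Set Finset MeasureTheory Filter Topology in
private lemma weib_tail_integral (m : ℕ) (hm : 1 ≤ m) (u : ℝ) (hu : 0 ≤ u) :
    IntegrableOn (fun x => Real.exp (-(x + 1) ^ ((1:ℝ)/m) + 1)) (Set.Ioi u) ∧
    ∫ x in Set.Ioi u, Real.exp (-(x + 1) ^ ((1:ℝ)/m) + 1)
      = (m.factorial : ℝ) * (Real.exp (-(u+1) ^ ((1:ℝ)/m) + 1)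
          * ∑ k ∈ Finset.range m, ((u+1) ^ ((1:ℝ)/m))^k / k.factorial) := by
  set c : ℝ := (1:ℝ)/m with hc
  have hmR : (0:ℝ) < m := by exact_mod_cast hm
  have hcpos : 0 < c := by positivity
  set G : ℝ → ℝ := fun x => -((m.factorial : ℝ) *
      (Real.exp (-(x+1)^c + 1) * ∑ k ∈ range m, ((x+1)^c) ^ k / k.factorial)) with hG
  have hderiv : ∀ x ∈ Ici u, HasDerivAt G (Real.exp (-(x + 1) ^ c + 1)) x := by
    intro x hx
    have hx1 : (0:ℝ) < x + 1 := by
      have : u ≤ x := hx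
      linarith
    have hs : HasDerivAt (fun x : ℝ => (x+1)^c) (1 * (c * (x+1)^(c-1))) x := by
      have := ((hasDerivAt_id x).add_const 1).rpow_const (p := c) (Or.inl (by simpa using hx1.ne'))
      simpa [mul_assoc] using this
    have hcomp := (weib_g_deriv m hm ((x+1)^c)).comp x hs
    have heq : ((m : ℝ) * ((x+1)^c) ^ (m - 1) * Real.exp (-(x+1)^c + 1))
        * (1 * (c * (x+1)^(c-1))) = Real.exp (-(x + 1) ^ c + 1) := by
      have h1 : ((x+1)^c) ^ (m - 1) = (x+1) ^ (c * (m - 1 : ℕ)) := by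
        rw [← Real.rpow_natCast ((x+1)^c) (m-1), ← Real.rpow_mul hx1.le]
      have h2 : (x+1) ^ (c * (m - 1 : ℕ)) * (x+1) ^ (c - 1) = 1 := by
        rw [← Real.rpow_add hx1]
        have hmc : c * ((m:ℝ) - 1) + (c - 1) = 0 := by
          rw [hc]; field_simp [hc]; ring
        have : ((m - 1 : ℕ) : ℝ) = (m : ℝ) - 1 := by
          have := Nat.cast_pred (by omega : 0 < m) (R := ℝ); exact this
        rw [this, hmc, Real.rpow_zero]
      have hmcne : (m:ℝ) * c = 1 := by rw [hc]; field_simp [hc]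
      calc ((m : ℝ) * ((x+1)^c) ^ (m - 1) * Real.exp (-(x+1)^c + 1))
            * (1 * (c * (x+1)^(c-1)))
          = ((m:ℝ) * c) * (((x+1)^c) ^ (m - 1) * (x+1)^(c-1)) * Real.exp (-(x+1)^c + 1) := by
            ring
        _ = Real.exp (-(x + 1) ^ c + 1) := by
            rw [hmcne, h1, h2]; ring
    rw [heq] at hcomp
    exact hcomp
  have htend : Tendsto G atTop (𝓝 0) := by
    have hphi : Tendsto (fun y : ℝ => Real.exp (-y + 1) * ∑ k ∈ range m, y ^ k / k.factorial)
        atTop (𝓝 0) := by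
      have heq : (fun y : ℝ => Real.exp (-y + 1) * ∑ k ∈ range m, y ^ k / k.factorial)
          = fun y : ℝ => ∑ k ∈ range m, Real.exp 1 * ((y ^ k * Real.exp (-y)) / k.factorial) := by
        funext y
        rw [Finset.mul_sum]
        refine Finset.sum_congr rfl fun k _ => ?_
        rw [Real.exp_add]
        ring
      rw [heq]
      have : Tendsto (fun y : ℝ => ∑ k ∈ range m,
          Real.exp 1 * ((y ^ k * Real.exp (-y)) / k.factorial)) atTop
          (𝓝 (∑ k ∈ range m, Real.exp 1 * ((0:ℝ) / k.factorial))) := by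
        apply tendsto_finset_sum
        intro k _
        exact (((tendsto_pow_mul_exp_neg_atTop_nhds_zero k).div_const _).const_mul _)
      simpa using this
    have hs : Tendsto (fun x : ℝ => (x+1)^c) atTop atTop :=
      (tendsto_rpow_atTop hcpos).comp (tendsto_atTop_add_const_right atTop 1 tendsto_id)
    have := ((hphi.comp hs).const_mul (m.factorial : ℝ)).neg
    simpa [hG, Function.comp] using this
  have hnn : ∀ x ∈ Ioi u, 0 ≤ Real.exp (-(x + 1) ^ c + 1) := fun x _ => (Real.exp_pos _).le
  constructor
  · exact integrableOn_Ioi_deriv_of_nonneg' hderiv hnn htend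
  · have := integral_Ioi_of_hasDerivAt_of_nonneg' hderiv hnn htend
    rw [this, hG]
    ring

open Real Set Finset MeasureTheory ProbabilityTheory Filter Topology in
private lemma weib_expectation_le {Ω : Type*} [MeasureSpace Ω]
    [IsProbabilityMeasure (ℙ : Measure Ω)]
    (m : ℕ) (hm : 1 ≤ m) (N : ℕ) (Y : Ω → ℝ) (hY : Measurable Y) (hnn : ∀ ω, 0 ≤ Y ω)
    (htail : ∀ t : ℝ, 0 ≤ t →
      (ℙ : Measure Ω) {ω | t < Y ω}
        ≤ (N : ENNReal) * ENNReal.ofReal (Real.exp (-(t + 1) ^ ((1:ℝ)/m) + 1)))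
    (u : ℝ) (hu : 0 ≤ u) :
    ∫ ω, Y ω ∂(ℙ : Measure Ω) ≤ u + N * ((m.factorial : ℝ) *
        (Real.exp (-(u+1) ^ ((1:ℝ)/m) + 1)
          * ∑ k ∈ Finset.range m, ((u+1) ^ ((1:ℝ)/m))^k / k.factorial)) := by
  obtain ⟨hint, hval⟩ := weib_tail_integral m hm u hu
  set V : ℝ := (m.factorial : ℝ) * (Real.exp (-(u+1) ^ ((1:ℝ)/m) + 1)
          * ∑ k ∈ Finset.range m, ((u+1) ^ ((1:ℝ)/m))^k / k.factorial) with hV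
  have hVnn : 0 ≤ V := by
    have : (0:ℝ) ≤ ∑ k ∈ Finset.range m, ((u+1) ^ ((1:ℝ)/m))^k / k.factorial := by
      apply Finset.sum_nonneg
      intro k _
      have : (0:ℝ) ≤ (u+1) ^ ((1:ℝ)/m) := Real.rpow_nonneg (by linarith) _
      positivity
    positivity
  rw [MeasureTheory.integral_eq_lintegral_of_nonneg_ae (ae_of_all _ hnn)
    hY.aestronglyMeasurable]
  apply ENNReal.toReal_le_of_le_ofReal (by positivity)
  rw [lintegral_eq_lintegral_meas_lt ℙ (ae_of_all _ hnn) hY.aemeasurable]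
  have hsplit : Set.Ioi (0:ℝ) = Set.Ioc 0 u ∪ Set.Ioi u := (Set.Ioc_union_Ioi_eq_Ioi hu).symm
  rw [hsplit, lintegral_union measurableSet_Ioi (Set.Ioc_disjoint_Ioi le_rfl)]
  have h1 : ∫⁻ t in Set.Ioc 0 u, (ℙ : Measure Ω) {ω | t < Y ω} ≤ ENNReal.ofReal u := by
    calc ∫⁻ t in Set.Ioc 0 u, (ℙ : Measure Ω) {ω | t < Y ω}
        ≤ ∫⁻ _ in Set.Ioc 0 u, 1 := lintegral_mono fun t => prob_le_one
      _ = ENNReal.ofReal u := by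
          rw [MeasureTheory.setLIntegral_one, Real.volume_Ioc]
          simp
  have h2 : ∫⁻ t in Set.Ioi u, (ℙ : Measure Ω) {ω | t < Y ω} ≤ ENNReal.ofReal (N * V) := by
    calc ∫⁻ t in Set.Ioi u, (ℙ : Measure Ω) {ω | t < Y ω}
        ≤ ∫⁻ t in Set.Ioi u, (N : ENNReal) *
            ENNReal.ofReal (Real.exp (-(t + 1) ^ ((1:ℝ)/m) + 1)) := by
          apply MeasureTheory.setLIntegral_mono' measurableSet_Ioi
          intro t ht
          exact htail t (le_trans hu (le_of_lt ht))
      _ = (N : ENNReal) * ∫⁻ t in Set.Ioi u,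
            ENNReal.ofReal (Real.exp (-(t + 1) ^ ((1:ℝ)/m) + 1)) := by
          rw [MeasureTheory.lintegral_const_mul]
          exact ENNReal.measurable_ofReal.comp (by fun_prop)
      _ = (N : ENNReal) * ENNReal.ofReal V := by
          congr 1
          rw [← hval]
          exact (MeasureTheory.ofReal_integral_eq_lintegral_ofReal hint
            (ae_of_all _ fun x => (Real.exp_pos _).le)).symm
      _ = ENNReal.ofReal (N * V) := by
          rw [ENNReal.ofReal_mul (p := (N:ℝ)) (by positivity), ENNReal.ofReal_natCast]
  calc (∫⁻ t in Set.Ioc 0 u, (ℙ : Measure Ω) {ω | t < Y ω})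
        + ∫⁻ t in Set.Ioi u, (ℙ : Measure Ω) {ω | t < Y ω}
      ≤ ENNReal.ofReal u + ENNReal.ofReal (N * V) := add_le_add h1 h2
    _ = ENNReal.ofReal (u + N * V) := (ENNReal.ofReal_add hu (by positivity)).symm

private lemma weib_factorial_le_of (L : ℝ) (k d : ℕ) (h : ((k:ℝ) + d) ≤ L) :
    (((k+d).factorial : ℝ)) ≤ k.factorial * L ^ d := by
  induction d with
  | zero => simp
  | succ n ih =>
    have hL0 : (0:ℝ) ≤ L := le_trans (by positivity) h
    have ih' := ih (by push_cast at h ⊢; linarith)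
    have hstep : ((k + n + 1 : ℕ) : ℝ) ≤ L := by push_cast at h ⊢; linarith
    have : ((k + (n+1)).factorial : ℝ) = ((k+n+1:ℕ) : ℝ) * ((k+n).factorial : ℝ) := by
      rw [show k + (n+1) = (k+n)+1 by ring, Nat.factorial_succ]
      push_cast; ring
    rw [this]
    calc ((k+n+1:ℕ) : ℝ) * ((k+n).factorial : ℝ) ≤ L * (k.factorial * L ^ n) := by
          apply mul_le_mul hstep ih' (by positivity) hL0
      _ = k.factorial * L ^ (n+1) := by ring

private lemma weib_sum_pow_half (m : ℕ) : ∑ j ∈ Finset.range m, ((1:ℝ)/2)^j ≤ 2 := by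
  have h := geom_sum_eq (by norm_num : ((1:ℝ)/2) ≠ 1) m
  rw [h]
  have : (0:ℝ) ≤ (1/2:ℝ)^m := by positivity
  have h1 : ((1:ℝ)/2)^m ≤ 1 := pow_le_one₀ (by norm_num) (by norm_num)
  rw [div_le_iff_of_neg (by norm_num : (1/2 : ℝ) - 1 < 0)]
  linarith

private lemma weib_two_pow_le_fac (m : ℕ) : (2:ℝ)^m ≤ 2 * m.factorial := by
  have : 2^m ≤ 2 * m.factorial := by
    induction m with
    | zero => norm_num
    | succ n ih =>
      rcases Nat.eq_zero_or_pos n with rfl | hn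
      · norm_num
      · calc 2^(n+1) = 2 * 2^n := by ring
          _ ≤ 2 * (2 * n.factorial) := by omega
          _ ≤ 2 * ((n+1) * n.factorial) := by
              have : 2 ≤ n + 1 := by omega
              have := Nat.mul_le_mul_right (n.factorial) this
              omega
          _ = 2 * (n+1).factorial := by rw [Nat.factorial_succ]
  calc (2:ℝ)^m = ((2^m : ℕ) : ℝ) := by push_cast; ring
    _ ≤ ((2 * m.factorial : ℕ) : ℝ) := by exact_mod_cast this
    _ = 2 * m.factorial := by push_cast; ring

private lemma weib_sum_2L (n : ℕ) (L : ℝ) (hL0 : 0 < L) (hnL : (n:ℝ) ≤ L) :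
    ∑ k ∈ Finset.range (n+1), (2*L)^k / k.factorial ≤ 2 * ((2*L)^n / n.factorial) := by
  have hterm : ∀ k ∈ Finset.range (n+1),
      (2*L)^k / k.factorial ≤ ((2*L)^n / n.factorial) * ((1:ℝ)/2)^(n-k) := by
    intro k hk
    have hkn : k ≤ n := by simpa [Nat.lt_succ_iff] using hk
    obtain ⟨d, rfl⟩ : ∃ d, n = k + d := ⟨n - k, by omega⟩
    have h1 : (((k+d).factorial : ℝ)) ≤ k.factorial * L ^ d :=
      weib_factorial_le_of L k d (by push_cast at hnL ⊢; linarith)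
    have hsimp : (k + d) - k = d := by omega
    rw [hsimp]
    have hrhs : ((2*L)^(k+d) / (k+d).factorial) * ((1:ℝ)/2)^d
        = (2*L)^k * L^d / (k+d).factorial := by
      rw [pow_add, mul_pow]
      field_simp
      rw [← mul_pow]; congr 1; ring
    rw [hrhs, div_le_div_iff₀ (by positivity) (by positivity)]
    have h2L : (0:ℝ) ≤ (2*L)^k := by positivity
    calc (2*L)^k * ((k+d).factorial : ℝ) ≤ (2*L)^k * (k.factorial * L^d) :=
          mul_le_mul_of_nonneg_left h1 h2L
      _ = (2*L)^k * L^d * k.factorial := by ring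
  calc ∑ k ∈ Finset.range (n+1), (2*L)^k / k.factorial
      ≤ ∑ k ∈ Finset.range (n+1), ((2*L)^n / n.factorial) * ((1:ℝ)/2)^(n-k) :=
        Finset.sum_le_sum hterm
    _ = ((2*L)^n / n.factorial) * ∑ k ∈ Finset.range (n+1), ((1:ℝ)/2)^(n-k) := by
        rw [Finset.mul_sum]
    _ ≤ ((2*L)^n / n.factorial) * 2 := by
        apply mul_le_mul_of_nonneg_left _ (by positivity)
        have hrefl := Finset.sum_range_reflect (fun j => ((1:ℝ)/2)^j) (n+1)
        simp only [Nat.add_sub_cancel] at hrefl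
        calc ∑ k ∈ Finset.range (n+1), ((1:ℝ)/2)^(n-k)
            = ∑ j ∈ Finset.range (n+1), ((1:ℝ)/2)^j := by
              rw [← hrefl]
          _ ≤ 2 := weib_sum_pow_half (n+1)
    _ = 2 * ((2*L)^n / n.factorial) := by ring

theorem weibull_max_expectation {Ω : Type*} [MeasureSpace Ω]
    [IsProbabilityMeasure (ℙ : Measure Ω)]
    (N : ℕ) (hN : Real.exp 1 ≤ (N : ℝ)) (hNpos : 0 < N) (m : ℕ) (hm : 1 ≤ m)
    (X : Fin N → Ω → ℝ) (hmeas : ∀ i, Measurable (X i))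
    (hnonneg : ∀ i ω, 0 ≤ X i ω)
    (hindep : iIndepFun X ℙ)
    (htail : ∀ i x, 0 ≤ x →
      ℙ {ω | x < X i ω} = ENNReal.ofReal (Real.exp (-(x + 1) ^ ((1:ℝ)/m) + 1))) :
    ∫ ω, (Finset.univ.sup' (Finset.univ_nonempty_iff.mpr
        ⟨⟨0, hNpos⟩⟩) fun i => X i ω) ∂ℙ
      ≤ 10 * m.factorial * Real.log N ^ m := by
  classical
  have hmR : (1:ℝ) ≤ m := by exact_mod_cast hm
  set L : ℝ := Real.log N with hLdef
  have hL1 : 1 ≤ L := by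
    have h := Real.log_le_log (Real.exp_pos 1) hN
    rwa [Real.log_exp] at h
  have hLpos : 0 < L := lt_of_lt_of_le one_pos hL1
  have hNL : (N:ℝ) = Real.exp L := by
    rw [hLdef, Real.exp_log (by exact_mod_cast hNpos)]
  have hne : (Finset.univ : Finset (Fin N)).Nonempty :=
    Finset.univ_nonempty_iff.mpr ⟨⟨0, hNpos⟩⟩
  set Y : Ω → ℝ := fun ω => Finset.univ.sup' (Finset.univ_nonempty_iff.mpr
        ⟨⟨0, hNpos⟩⟩) fun i => X i ω with hYdef
  have hYmeas : Measurable Y := by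
    have hYeq : Y = Finset.univ.sup' hne (fun i => X i) := by
      funext ω
      exact (Finset.sup'_apply hne (fun i => X i) ω).symm
    rw [hYeq]
    exact Finset.measurable_sup' hne (fun i _ => hmeas i)
  have hYnn : ∀ ω, 0 ≤ Y ω := by
    intro ω
    exact le_trans (hnonneg ⟨0, hNpos⟩ ω)
      (Finset.le_sup' (fun i => X i ω) (Finset.mem_univ ⟨0, hNpos⟩))
  have htailY : ∀ t : ℝ, 0 ≤ t →
      (ℙ : Measure Ω) {ω | t < Y ω}
        ≤ (N : ENNReal) * ENNReal.ofReal (Real.exp (-(t + 1) ^ ((1:ℝ)/m) + 1)) := by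
    intro t ht
    have hset : {ω : Ω | t < Y ω} = ⋃ i, {ω : Ω | t < X i ω} := by
      ext ω
      simp only [Set.mem_setOf_eq, Set.mem_iUnion, hYdef, Finset.lt_sup'_iff,
        Finset.mem_univ, true_and]
    rw [hset]
    calc (ℙ : Measure Ω) (⋃ i, {ω : Ω | t < X i ω})
        ≤ ∑ i : Fin N, (ℙ : Measure Ω) {ω : Ω | t < X i ω} :=
          measure_iUnion_fintype_le _ _
      _ = ∑ _i : Fin N, ENNReal.ofReal (Real.exp (-(t + 1) ^ ((1:ℝ)/m) + 1)) :=
          Finset.sum_congr rfl fun i _ => htail i t ht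
      _ = (N : ENNReal) * ENNReal.ofReal (Real.exp (-(t + 1) ^ ((1:ℝ)/m) + 1)) := by
          rw [Finset.sum_const, Finset.card_univ, Fintype.card_fin, nsmul_eq_mul]
  have key := weib_expectation_le m hm N Y hYmeas hYnn htailY
  have hfacnn : (0:ℝ) ≤ m.factorial := by positivity
  have hLmnn : (0:ℝ) ≤ L ^ m := by positivity
  rcases le_or_gt L (m:ℝ) with hcase | hcase
  · -- small L: cutoff u = 0
    refine le_trans (key 0 le_rfl) ?_
    have h01 : ((0:ℝ) + 1) ^ ((1:ℝ)/m) = 1 := by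
      rw [zero_add, Real.one_rpow]
    rw [h01]
    have hE : Real.exp (-(1:ℝ) + 1) = 1 := by norm_num
    rw [hE]
    simp only [one_pow, one_mul, zero_add]
    have hsum : ∑ k ∈ Finset.range m, (1:ℝ) / k.factorial ≤ Real.exp 1 := by
      have h := Real.sum_le_exp_of_nonneg zero_le_one m
      simpa using h
    have hexpL : Real.exp L ≤ Real.exp 1 * L ^ m := by
      have hlog : 1 - 1/L ≤ Real.log L := by
        have h := Real.log_le_sub_one_of_pos (show (0:ℝ) < L⁻¹ by positivity)
        rw [Real.log_inv] at h
        rw [one_div]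
        linarith
      have h2 : L - 1 ≤ (m:ℝ) * Real.log L := by
        have hlog0 : 0 ≤ Real.log L := Real.log_nonneg hL1
        have ha : L * Real.log L ≤ (m:ℝ) * Real.log L :=
          mul_le_mul_of_nonneg_right hcase hlog0
        have hb : L * (1 - 1/L) ≤ L * Real.log L :=
          mul_le_mul_of_nonneg_left hlog hLpos.le
        have hc : L * (1 - 1/L) = L - 1 := by field_simp
        linarith
      calc Real.exp L = Real.exp 1 * Real.exp (L - 1) := by
            rw [← Real.exp_add]; ring_nf
        _ ≤ Real.exp 1 * Real.exp ((m:ℝ) * Real.log L) :=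
            mul_le_mul_of_nonneg_left (Real.exp_le_exp.mpr h2) (Real.exp_pos 1).le
        _ = Real.exp 1 * L ^ m := by
            rw [Real.exp_nat_mul, Real.exp_log hLpos]
    have he1 : Real.exp 1 < 2.7182818286 := Real.exp_one_lt_d9
    have hsumnn : 0 ≤ ∑ k ∈ Finset.range m, (1:ℝ) / k.factorial := Finset.sum_nonneg fun k _ => by positivity
    calc (N:ℝ) * ((m.factorial : ℝ) * ∑ k ∈ Finset.range m, (1:ℝ) / k.factorial)
        ≤ Real.exp L * ((m.factorial : ℝ) * Real.exp 1) := by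
          rw [hNL]
          exact mul_le_mul_of_nonneg_left
            (mul_le_mul_of_nonneg_left hsum hfacnn) (Real.exp_pos L).le
      _ ≤ (Real.exp 1 * L ^ m) * ((m.factorial : ℝ) * Real.exp 1) :=
          mul_le_mul_of_nonneg_right hexpL (by positivity)
      _ ≤ 10 * m.factorial * L ^ m := by
          have he2 : Real.exp 1 * Real.exp 1 ≤ 7.39 := by
            nlinarith [he1, (Real.exp_pos 1).le]
          nlinarith [mul_nonneg hfacnn hLmnn,
            mul_le_mul_of_nonneg_right he2 (mul_nonneg hfacnn hLmnn)]
  · -- large L: cutoff u = (2L)^m - 1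
    obtain ⟨n, rfl⟩ : ∃ n, m = n + 1 := ⟨m - 1, (Nat.succ_pred_eq_of_pos hm).symm⟩
    have h2L1 : (1:ℝ) ≤ 2 * L := by linarith
    set u : ℝ := (2*L)^(n+1) - 1 with hudef
    have hu : 0 ≤ u := by
      have : (1:ℝ) ≤ (2*L)^(n+1) := one_le_pow₀ h2L1
      simp only [hudef]; linarith
    refine le_trans (key u hu) ?_
    have hupow : u + 1 = (2*L)^(n+1) := by simp [hudef]
    have ha : (u+1) ^ ((1:ℝ)/((n+1:ℕ):ℝ)) = 2*L := by
      rw [hupow, ← Real.rpow_natCast (2*L) (n+1),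
        ← Real.rpow_mul (by linarith : (0:ℝ) ≤ 2*L)]
      rw [mul_one_div, div_self (by positivity : ((n+1:ℕ):ℝ) ≠ 0), Real.rpow_one]
    rw [ha]
    have hnL : ((n:ℕ):ℝ) ≤ L := by
      have : ((n+1:ℕ):ℝ) < L := by exact_mod_cast hcase
      push_cast at this ⊢
      linarith
    have hn1L : ((n:ℝ)+1) ≤ L := by
      have : ((n+1:ℕ):ℝ) < L := by exact_mod_cast hcase
      push_cast at this
      linarith
    have hS := weib_sum_2L n L hLpos hnL
    set S : ℝ := ∑ k ∈ Finset.range (n+1), (2*L)^k / k.factorial with hSdef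
    have hSnn : 0 ≤ S := by
      apply Finset.sum_nonneg
      intro k _
      positivity
    set F : ℝ := ((n+1).factorial : ℝ) with hFdef
    have hFpos : 0 < F := by positivity
    have hFf : F = ((n:ℝ)+1) * (n.factorial : ℝ) := by
      rw [hFdef, Nat.factorial_succ]
      push_cast; ring
    have hexpcomb : (N:ℝ) * Real.exp (-(2*L)+1) = Real.exp (1 - L) := by
      rw [hNL, ← Real.exp_add]
      congr 1
      ring
    have hmain : (N:ℝ) * (F * (Real.exp (-(2*L)+1) * S)) = F * (Real.exp (1-L) * S) := by
      rw [← hexpcomb]; ring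
    have hE1 : Real.exp (1-L) ≤ 1 := Real.exp_le_one_iff.mpr (by linarith)
    have h2p := weib_two_pow_le_fac (n+1)
    have hLn : (0:ℝ) ≤ L^n := by positivity
    have hterm2 : F * (Real.exp (1-L) * S) ≤ 2 * F * L^(n+1) := by
      have s1 : Real.exp (1-L) * S ≤ S := by
        nlinarith
      have s2 : F * (Real.exp (1-L) * S) ≤ F * (2 * ((2*L)^n / n.factorial)) := by
        apply mul_le_mul_of_nonneg_left (le_trans s1 hS) hFpos.le
      have s3 : F * (2 * ((2*L)^n / n.factorial)) = ((n:ℝ)+1) * 2^(n+1) * L^n := by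
        rw [hFf, mul_pow]
        have hnf : (n.factorial : ℝ) ≠ 0 := by positivity
        field_simp
        ring
      have s4 : ((n:ℝ)+1) * 2^(n+1) * L^n ≤ ((n:ℝ)+1) * (2 * F) * L^n := by
        apply mul_le_mul_of_nonneg_right _ hLn
        apply mul_le_mul_of_nonneg_left h2p (by positivity)
      have s5 : ((n:ℝ)+1) * (2 * F) * L^n ≤ L * (2 * F) * L^n := by
        apply mul_le_mul_of_nonneg_right _ hLn
        apply mul_le_mul_of_nonneg_right hn1L (by positivity)
      have s6 : L * (2 * F) * L^n = 2 * F * L^(n+1) := by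
        rw [pow_succ]; ring
      linarith
    have hterm1 : u ≤ 2 * F * L^(n+1) := by
      have : (2*L)^(n+1) = 2^(n+1) * L^(n+1) := by rw [mul_pow]
      have h1 : (2:ℝ)^(n+1) * L^(n+1) ≤ (2*F) * L^(n+1) :=
        mul_le_mul_of_nonneg_right h2p (by positivity)
      simp only [hudef]
      rw [this]
      linarith
    have hfin : 0 ≤ F * L^(n+1) := by positivity
    rw [hmain]
    linarith [hterm1, hterm2, hfin]
end
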